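/- Let (ν_n) : ((C_n),(F_n)) → ((D_n),(G_n)) be a morphism of sequences of I-filtered categories (I a directed poset), where both sequences have inverse limits that are unions of their filtered pieces, and the first sequence satisfies: for each I there is N_I such that F_n^I is an equivalence for n ≥ N_I. If for every I ∈ I there is N such that ν_n^I : C_n^I → D_n^I is an equivalence for all n ≥ N, then lim ν_n : lim C_n → lim D_n is an equivalence of categories. -/

import Mathlib

/-!
STATEMENT 16: Let `(ν_n) : ((C_n),(F_n)) → ((D_n),(G_n))` be a morphism of
sequences of `I`-filtered categories (`I` a directed poset), where both
sequences have inverse limits that are unions of their filtered pieces, and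
the first sequence satisfies: for each `I` there is `N_I` such that `F_n^I` is
an equivalence for all `n ≥ N_I`.  If for every `I` there is `N` such that
`ν_n^I : C_n^I → D_n^I` is an equivalence for all `n ≥ N`, then
`lim ν_n : lim C_n → lim D_n` is an equivalence of categories.
-/

open CategoryTheory

universe v u

/-- The inverse limit of a sequence of categories: objects are sequences of
objects together with compatibility isomorphisms. -/
structure InvLim {C : ℕ → Type u} [∀ n, Category.{v} (C n)]
    (F : ∀ n, C (n + 1) ⥤ C n) where
  obj : ∀ n, C n
  iso : ∀ n, (F n).obj (obj (n + 1)) ≅ obj n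

namespace InvLim

variable {C : ℕ → Type u} [∀ n, Category.{v} (C n)] {F : ∀ n, C (n + 1) ⥤ C n}

instance : Category (InvLim F) where
  Hom M N := {α : ∀ n, M.obj n ⟶ N.obj n //
    ∀ n, (F n).map (α (n + 1)) ≫ (N.iso n).hom = (M.iso n).hom ≫ α n}
  id M := ⟨fun _ => 𝟙 _, fun n => by simp⟩
  comp {M N P} α β := ⟨fun n => α.1 n ≫ β.1 n, fun n => by
    rw [Functor.map_comp, Category.assoc, β.2 n, ← Category.assoc, α.2 n, Category.assoc]⟩
  id_comp f := Subtype.ext (funext fun n => Category.id_comp _)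
  comp_id f := Subtype.ext (funext fun n => Category.comp_id _)
  assoc f g h := Subtype.ext (funext fun n => Category.assoc _ _ _)

end InvLim

/-- The functor between inverse limits induced by a morphism of sequences of
categories `(ν_n)`, with commutativity isomorphisms `comm`. -/
def limFunctor {C D : ℕ → Type u} [∀ n, Category.{v} (C n)] [∀ n, Category.{v} (D n)]
    (F : ∀ n, C (n + 1) ⥤ C n) (G : ∀ n, D (n + 1) ⥤ D n)
    (ν : ∀ n, C n ⥤ D n)
    (comm : ∀ n, F n ⋙ ν n ≅ ν (n + 1) ⋙ G n) :
    InvLim F ⥤ InvLim G where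
  obj M :=
    { obj := fun n => (ν n).obj (M.obj n)
      iso := fun n => (comm n).symm.app (M.obj (n + 1)) ≪≫ (ν n).mapIso (M.iso n) }
  map {M N} α := ⟨fun n => (ν n).map (α.1 n), fun n => by
    dsimp
    have h1 := (comm n).inv.naturality (α.1 (n + 1))
    dsimp at h1
    rw [← Category.assoc, h1, Category.assoc, ← Functor.map_comp, α.2 n,
      Functor.map_comp, Category.assoc]⟩
  map_id M := Subtype.ext (funext fun n => (ν n).map_id _)
  map_comp f g := Subtype.ext (funext fun n => (ν n).map_comp _ _)


namespace InvLim

variable {C : ℕ → Type u} [∀ n, Category.{v} (C n)] {F : ∀ n, C (n + 1) ⥤ C n}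

/-- Build an isomorphism in `InvLim` from compatible componentwise isomorphisms. -/
def mkIso {M N : InvLim F} (e : ∀ n, M.obj n ≅ N.obj n)
    (h : ∀ n, (F n).map (e (n + 1)).hom ≫ (N.iso n).hom = (M.iso n).hom ≫ (e n).hom) :
    M ≅ N where
  hom := ⟨fun n => (e n).hom, h⟩
  inv := ⟨fun n => (e n).inv, fun n => by
    have hM : (M.iso n).hom = (F n).map (e (n + 1)).hom ≫ (N.iso n).hom ≫ (e n).inv := by
      rw [← Category.assoc, h n]; simp
    rw [hM]; simp⟩
  hom_inv_id := Subtype.ext (funext fun n => (e n).hom_inv_id)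
  inv_hom_id := Subtype.ext (funext fun n => (e n).inv_hom_id)

end InvLim

theorem downInduction {P : ℕ → Prop} (n₀ : ℕ) (htop : ∀ n, n₀ ≤ n → P n)
    (hstep : ∀ n, n < n₀ → P (n + 1) → P n) : ∀ n, P n := by
  have key : ∀ d n, n₀ ≤ n + d → P n := by
    intro d
    induction d with
    | zero => intro n h; exact htop n (by omega)
    | succ d ih =>
      intro n h
      rcases le_or_gt n₀ n with h' | h'
      · exact htop n h'
      · exact hstep n h' (ih (n + 1) (by omega))
  exact fun n => key n₀ n (by omega)

def extendDown {X : ℕ → Sort*} : ∀ (n₀ : ℕ), (∀ n, n₀ ≤ n → X n) →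
    (∀ n, X (n + 1) → X n) → ∀ n, X n
  | 0, top, _ => fun n => top n (Nat.zero_le n)
  | n₀ + 1, top, step =>
    extendDown n₀ (fun n hn =>
      if h : n₀ + 1 ≤ n then top n h
      else step n (top (n + 1) (by omega))) step

theorem extendDown_ge {X : ℕ → Sort*} : ∀ (n₀ : ℕ) (top : ∀ n, n₀ ≤ n → X n)
    (step : ∀ n, X (n + 1) → X n) (n : ℕ) (hn : n₀ ≤ n),
    extendDown n₀ top step n = top n hn
  | 0, top, step, n, hn => rfl
  | n₀ + 1, top, step, n, hn => by
    rw [extendDown, extendDown_ge n₀ _ step n (by omega)]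
    rw [dif_pos hn]

theorem extendDown_lt {X : ℕ → Sort*} : ∀ (n₀ : ℕ) (top : ∀ n, n₀ ≤ n → X n)
    (step : ∀ n, X (n + 1) → X n) (n : ℕ), n < n₀ →
    extendDown n₀ top step n = step n (extendDown n₀ top step (n + 1))
  | n₀ + 1, top, step, n, hn => by
    rcases lt_or_ge n n₀ with h | h
    · rw [extendDown, extendDown_lt n₀ _ step n h]
    · have hn0 : n = n₀ := by omega
      subst hn0
      rw [extendDown, extendDown_ge n _ step n le_rfl, dif_neg (by omega),
        extendDown_ge n _ step (n + 1) (by omega), dif_pos (by omega)]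

section Helpers

variable {E : Type u} [Category.{v} E] {E' : Type u} [Category.{v} E']
  {P : E → Prop} {P' : E' → Prop} (Φ : E ⥤ E') (hΦ : ∀ X, P X → P' (Φ.obj X))

/-- The lift of a filtered functor to the full subcategories. -/
abbrev liftF : ObjectProperty.FullSubcategory P ⥤ ObjectProperty.FullSubcategory P' :=
  ObjectProperty.lift P' (ObjectProperty.ι P ⋙ Φ) (fun X => hΦ X.1 X.2)

theorem lift_faithful (hL : (liftF Φ hΦ).Faithful) {X Y : E} (hX : P X) (hY : P Y)
    {f g : X ⟶ Y} (h : Φ.map f = Φ.map g) : f = g :=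
  congrArg (fun k => k.hom) (hL.map_injective (X := ⟨X, hX⟩) (Y := ⟨Y, hY⟩)
    (show (liftF Φ hΦ).map (ObjectProperty.homMk (X := ⟨X, hX⟩) (Y := ⟨Y, hY⟩) f)
        = (liftF Φ hΦ).map (ObjectProperty.homMk (X := ⟨X, hX⟩) (Y := ⟨Y, hY⟩) g)
        from ObjectProperty.hom_ext P' h))

theorem lift_full (hL : (liftF Φ hΦ).Full) {X Y : E} (hX : P X) (hY : P Y)
    (g : Φ.obj X ⟶ Φ.obj Y) : ∃ f : X ⟶ Y, Φ.map f = g := by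
  obtain ⟨f, hf⟩ := hL.map_surjective (X := ⟨X, hX⟩) (Y := ⟨Y, hY⟩) (ObjectProperty.homMk g)
  exact ⟨f.hom, congrArg (fun k => k.hom) hf⟩

theorem lift_esssurj (hL : (liftF Φ hΦ).EssSurj) {Y' : E'} (hY' : P' Y') :
    ∃ A : ObjectProperty.FullSubcategory P, Nonempty (Φ.obj A.obj ≅ Y') := by
  haveI := hL
  refine ⟨(liftF Φ hΦ).objPreimage ⟨Y', hY'⟩,
    ⟨(ObjectProperty.ι P').mapIso ((liftF Φ hΦ).objObjPreimageIso ⟨Y', hY'⟩)⟩⟩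

theorem lift_preimageIso (hL : (liftF Φ hΦ).Full) (hL' : (liftF Φ hΦ).Faithful)
    {X Y : E} (hX : P X) (hY : P Y) (u : Φ.obj X ≅ Φ.obj Y) :
    ∃ e : X ≅ Y, Φ.map e.hom = u.hom := by
  haveI := hL; haveI := hL'
  let u' : (liftF Φ hΦ).obj ⟨X, hX⟩ ≅ (liftF Φ hΦ).obj ⟨Y, hY⟩ :=
    ObjectProperty.isoMk P' u
  refine ⟨(ObjectProperty.ι P).mapIso ((liftF Φ hΦ).preimageIso u'), ?_⟩
  exact congrArg (fun k => k.hom) ((liftF Φ hΦ).map_preimage u'.hom)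

end Helpers


theorem statement16 {ι : Type} [Preorder ι]
    -- `ι` is directed:
    (hdir : ∀ i j : ι, ∃ k, i ≤ k ∧ j ≤ k)
    {C D : ℕ → Type u} [∀ n, Category.{v} (C n)] [∀ n, Category.{v} (D n)]
    (F : ∀ n, C (n + 1) ⥤ C n) (G : ∀ n, D (n + 1) ⥤ D n)
    -- the filtrations by strictly full subcategories, increasing in `ι`:
    (PC : ∀ n, ι → C n → Prop) (PD : ∀ n, ι → D n → Prop)
    (hPCmono : ∀ n {I J} (_ : I ≤ J) X, PC n I X → PC n J X)
    (hPDmono : ∀ n {I J} (_ : I ≤ J) X, PD n I X → PD n J X)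
    (hPCiso : ∀ n I {X Y : C n}, (X ≅ Y) → PC n I X → PC n I Y)
    (hPDiso : ∀ n I {X Y : D n}, (X ≅ Y) → PD n I X → PD n I Y)
    -- the structure functors are filtered:
    (hF : ∀ n I X, PC (n + 1) I X → PC n I ((F n).obj X))
    (hG : ∀ n I X, PD (n + 1) I X → PD n I ((G n).obj X))
    -- the morphism of sequences `(ν_n)`, commuting with the structure functors
    -- up to natural isomorphism, and filtered:
    (ν : ∀ n, C n ⥤ D n)
    (comm : ∀ n, F n ⋙ ν n ≅ ν (n + 1) ⋙ G n)
    (hν : ∀ n I X, PC n I X → PD n I ((ν n).obj X))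
    -- both inverse limits are unions of their filtered pieces:
    (hCunion : ∀ M : InvLim F, ∃ I, ∀ n, PC n I (M.obj n))
    (hDunion : ∀ M : InvLim G, ∃ I, ∀ n, PD n I (M.obj n))
    -- for each `I`, `F_n^I` is eventually an equivalence:
    (hFeq : ∀ I : ι, ∃ N, ∀ n ≥ N,
      (ObjectProperty.lift (PC n I)
        (ObjectProperty.ι (PC (n + 1) I) ⋙ F n)
        (fun X => hF n I X.1 X.2)).IsEquivalence)
    -- for each `I`, `ν_n^I` is eventually an equivalence:
    (hνeq : ∀ I : ι, ∃ N, ∀ n ≥ N,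
      (ObjectProperty.lift (PD n I)
        (ObjectProperty.ι (PC n I) ⋙ ν n)
        (fun X => hν n I X.1 X.2)).IsEquivalence) :
    -- conclusion: `lim ν_n` is an equivalence of categories:
    (limFunctor F G ν comm).IsEquivalence := by
  classical
  constructor
  case faithful =>
    refine ⟨fun {M N} {α α'} h => ?_⟩
    obtain ⟨I₁, hI₁⟩ := hCunion M
    obtain ⟨I₂, hI₂⟩ := hCunion N
    obtain ⟨I, hII₁, hII₂⟩ := hdir I₁ I₂
    have hM : ∀ n, PC n I (M.obj n) := fun n => hPCmono n hII₁ _ (hI₁ n)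
    have hN : ∀ n, PC n I (N.obj n) := fun n => hPCmono n hII₂ _ (hI₂ n)
    obtain ⟨n₀, hn₀⟩ := hνeq I
    have hcomp : ∀ n, (ν n).map (α.1 n) = (ν n).map (α'.1 n) := fun n =>
      congrFun (congrArg Subtype.val h) n
    refine Subtype.ext (funext ?_)
    refine downInduction n₀ (fun n hn => ?_) (fun n hn ih => ?_)
    · exact lift_faithful (ν n) (fun X hX => hν n I X hX) ((hn₀ n hn).faithful)
        (hM n) (hN n) (hcomp n)
    · have e1 := α.2 n
      have e2 := α'.2 n
      rw [ih] at e1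
      exact (cancel_epi ((M.iso n).hom)).mp (e1.symm.trans e2)
  case full =>
    refine ⟨fun {M N} β => ?_⟩
    obtain ⟨I₁, hI₁⟩ := hCunion M
    obtain ⟨I₂, hI₂⟩ := hCunion N
    obtain ⟨I, hII₁, hII₂⟩ := hdir I₁ I₂
    have hM : ∀ n, PC n I (M.obj n) := fun n => hPCmono n hII₁ _ (hI₁ n)
    have hN : ∀ n, PC n I (N.obj n) := fun n => hPCmono n hII₂ _ (hI₂ n)
    obtain ⟨n₀, hn₀⟩ := hνeq I
    have htop : ∀ n, n₀ ≤ n → ∃ f : M.obj n ⟶ N.obj n, (ν n).map f = β.1 n := fun n hn =>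
      lift_full (ν n) (fun X hX => hν n I X hX) ((hn₀ n hn).full) (hM n) (hN n) (β.1 n)
    let α : ∀ n, M.obj n ⟶ N.obj n := extendDown n₀ (fun n hn => (htop n hn).choose)
      (fun n f => (M.iso n).inv ≫ (F n).map f ≫ (N.iso n).hom)
    have hge : ∀ n (hn : n₀ ≤ n), α n = (htop n hn).choose := fun n hn =>
      extendDown_ge n₀ _ _ n hn
    have hlt : ∀ n, n < n₀ → α n = (M.iso n).inv ≫ (F n).map (α (n + 1)) ≫ (N.iso n).hom :=
      fun n hn => extendDown_lt n₀ _ _ n hn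
    have hb : ∀ n, (G n).map (β.1 (n + 1)) ≫ (comm n).inv.app (N.obj (n + 1)) ≫
          (ν n).map (N.iso n).hom
        = (comm n).inv.app (M.obj (n + 1)) ≫ (ν n).map (M.iso n).hom ≫ β.1 n := by
      intro n
      have hβ := β.2 n
      simp only [limFunctor, Iso.trans_hom, Iso.symm_hom, Functor.mapIso_hom,
        Category.assoc] at hβ
      exact hβ
    have hnat : ∀ n, (ν n).map ((F n).map (α (n + 1)))
        = (comm n).hom.app (M.obj (n + 1)) ≫ (G n).map ((ν (n + 1)).map (α (n + 1))) ≫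
          (comm n).inv.app (N.obj (n + 1)) := by
      intro n
      have hc := (comm n).hom.naturality (α (n + 1))
      simp only [Functor.comp_map] at hc
      rw [← Category.assoc, ← hc]
      simp
    have hαβ : ∀ n, (ν n).map (α n) = β.1 n := by
      refine downInduction n₀ (fun n hn => ?_) (fun n hn ih => ?_)
      · rw [hge n hn]; exact (htop n hn).choose_spec
      · rw [hlt n hn]
        rw [Functor.map_comp, Functor.map_comp, hnat n, ih]
        simp only [Category.assoc]
        erw [hb n]
        erw [Iso.hom_inv_id_app_assoc]
        erw [← Category.assoc, ← Functor.map_comp, Iso.inv_hom_id, CategoryTheory.Functor.map_id, Category.id_comp]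
    have hα2 : ∀ n, (F n).map (α (n + 1)) ≫ (N.iso n).hom = (M.iso n).hom ≫ α n := by
      intro n
      rcases lt_or_ge n n₀ with hn | hn
      · rw [hlt n hn]; simp
      · refine lift_faithful (ν n) (fun X hX => hν n I X hX) ((hn₀ n hn).faithful)
          (hF n I _ (hM (n + 1))) (hN n) ?_
        rw [Functor.map_comp, Functor.map_comp, hnat n, hαβ (n + 1), hαβ n]
        simp only [Category.assoc]
        erw [hb n]
        erw [Iso.hom_inv_id_app_assoc]
        rfl
    exact ⟨⟨α, hα2⟩, Subtype.ext (funext hαβ)⟩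
  case essSurj =>
    refine ⟨fun Y => ?_⟩
    obtain ⟨I, hY⟩ := hDunion Y
    obtain ⟨n₀, hn₀⟩ := hνeq I
    have htop : ∀ n, n₀ ≤ n →
        ∃ A : ObjectProperty.FullSubcategory (PC n I), Nonempty ((ν n).obj A.obj ≅ Y.obj n) :=
      fun n hn => lift_esssurj (ν n) (fun X hX => hν n I X hX) ((hn₀ n hn).essSurj) (hY n)
    let W : ∀ n, Σ' A : ObjectProperty.FullSubcategory (PC n I), (ν n).obj A.obj ≅ Y.obj n :=
      extendDown n₀ (fun n hn => ⟨(htop n hn).choose, (htop n hn).choose_spec.some⟩)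
        (fun n q => ⟨⟨(F n).obj q.1.obj, hF n I _ q.1.2⟩,
          (comm n).app q.1.obj ≪≫ (G n).mapIso q.2 ≪≫ Y.iso n⟩)
    have Wlt : ∀ n, n < n₀ → W n = ⟨⟨(F n).obj (W (n + 1)).1.obj, hF n I _ (W (n + 1)).1.2⟩,
        (comm n).app (W (n + 1)).1.obj ≪≫ (G n).mapIso (W (n + 1)).2 ≪≫ Y.iso n⟩ :=
      fun n hn => extendDown_lt n₀ _ _ n hn
    have hMiso : ∀ n, ∃ e : (F n).obj ((W (n + 1)).1.obj) ≅ (W n).1.obj,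
        (ν n).map e.hom = (comm n).hom.app ((W (n + 1)).1.obj) ≫
          (G n).map ((W (n + 1)).2.hom) ≫ (Y.iso n).hom ≫ (W n).2.inv := by
      intro n
      rcases lt_or_ge n n₀ with hn | hn
      · rw [Wlt n hn]
        exact ⟨Iso.refl _, by simp⟩
      · obtain ⟨e, he⟩ := lift_preimageIso (ν n) (fun X hX => hν n I X hX)
          ((hn₀ n hn).full) ((hn₀ n hn).faithful)
          (hF n I _ (W (n + 1)).1.2) (W n).1.2
          ((comm n).app ((W (n + 1)).1.obj) ≪≫ (G n).mapIso (W (n + 1)).2 ≪≫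
            Y.iso n ≪≫ (W n).2.symm)
        exact ⟨e, by simpa using he⟩
    choose Miso hMspec using hMiso
    refine ⟨⟨fun n => (W n).1.obj, Miso⟩, ⟨InvLim.mkIso (fun n => (W n).2) (fun n => ?_)⟩⟩
    simp only [limFunctor, Iso.trans_hom, Iso.symm_hom, Functor.mapIso_hom, Category.assoc]
    rw [hMspec n]
    simp
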